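/- Let Z be a set of six points of P^1 x P^1 in multiplicity 1 generic position and let I = I(Z). Then I^2 ≠ I^(2); indeed α(I^(2)) ≤ 7 while α(I^2) = 8, so I^(2) is not contained in I^2. -/

import Mathlib

open MvPolynomial

noncomputable section

/-- The weights giving the bigrading on `k[x0,x1,y0,y1]` with
`deg x0 = deg x1 = (1,0)` and `deg y0 = deg y1 = (0,1)`. -/
def w4 : Fin 4 → ℕ × ℕ := ![(1,0), (1,0), (0,1), (0,1)]

variable (k : Type*) [Field k]

/-- `p = ((a0,a1),(b0,b1))` represents a point `[a0:a1] × [b0:b1]` of `P^1 × P^1`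
if neither pair of coordinates is identically zero. -/
def IsPtRep (p : (k × k) × (k × k)) : Prop := p.1 ≠ 0 ∧ p.2 ≠ 0

/-- Two (nonzero) vectors of `k²` define the same point of `P^1`. -/
def ProjEq (u v : k × k) : Prop := u.1 * v.2 = u.2 * v.1

/-- Two representatives define the same point of `P^1 × P^1`. -/
def PtEq (p q : (k × k) × (k × k)) : Prop := ProjEq k p.1 q.1 ∧ ProjEq k p.2 q.2

/-- The bihomogeneous ideal of the point `[a0:a1] × [b0:b1]`, namely
`(a1*x0 - a0*x1, b1*y0 - b0*y1)`. -/
def pointIdeal (p : (k × k) × (k × k)) : Ideal (MvPolynomial (Fin 4) k) :=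
  Ideal.span {C p.1.2 * X 0 - C p.1.1 * X 1, C p.2.2 * X 2 - C p.2.1 * X 3}

/-- The ideal `I(Z) = ∩ I(P_i)` of a finite tuple of points. -/
def idealOfPoints {s : ℕ} (Z : Fin s → (k × k) × (k × k)) :
    Ideal (MvPolynomial (Fin 4) k) :=
  ⨅ i, pointIdeal k (Z i)

/-- The `m`-th symbolic power `I(Z)^(m) = ∩ I(P_i)^m`. -/
def symbolicPower {s : ℕ} (Z : Fin s → (k × k) × (k × k)) (m : ℕ) :
    Ideal (MvPolynomial (Fin 4) k) :=
  ⨅ i, (pointIdeal k (Z i)) ^ m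

/-- The bigraded piece `J_(i,j)` of a bihomogeneous ideal, as a `k`-subspace. -/
def bipiece (J : Ideal (MvPolynomial (Fin 4) k)) (d : ℕ × ℕ) :
    Submodule k (MvPolynomial (Fin 4) k) :=
  (Submodule.restrictScalars k J) ⊓ (weightedHomogeneousSubmodule k w4 d)

/-- `α(J)`: the least total degree `t = i + j` in which `J` has a nonzero
bihomogeneous element of bidegree `(i,j)`. -/
def alpha (J : Ideal (MvPolynomial (Fin 4) k)) : ℕ :=
  sInf {t | ∃ F ∈ J, F ≠ 0 ∧ ∃ d : ℕ × ℕ, d.1 + d.2 = t ∧ F.IsWeightedHomogeneous w4 d}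

/-- The coordinates of a tuple of points of `P^1 × P^1`, as a point of affine `4s`-space. -/
def coordsOf {s : ℕ} (Z : Fin s → (k × k) × (k × k)) : Fin s × Fin 4 → k :=
  fun p => ![(Z p.1).1.1, (Z p.1).1.2, (Z p.1).2.1, (Z p.1).2.2] p.2

/-- The weights making `k[(P^1 × P^1)^s]` multigraded. -/
def wProd (s : ℕ) : Fin s × Fin 4 → (Fin s → ℕ × ℕ) := fun p => Pi.single p.1 (w4 p.2)

/-- `GeneralPosition k s P` says that property `P` holds for `s` general points of
`P^1 × P^1`: there is a nonempty Zariski-open subset `U` of `(P^1 × P^1)^s` (the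
complement of the zero locus of a multihomogeneous form `G` not vanishing identically)
such that `P` holds for every tuple of pairwise distinct points lying in `U`. -/
def GeneralPosition (s : ℕ) (P : (Fin s → (k × k) × (k × k)) → Prop) : Prop :=
  ∃ (G : MvPolynomial (Fin s × Fin 4) k) (d : Fin s → ℕ × ℕ),
    G.IsWeightedHomogeneous (wProd s) d ∧
    (∃ Z : Fin s → (k × k) × (k × k), (∀ i, IsPtRep k (Z i)) ∧ eval (coordsOf k Z) G ≠ 0) ∧
    ∀ Z : Fin s → (k × k) × (k × k), (∀ i, IsPtRep k (Z i)) →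
      (∀ i j, i ≠ j → ¬ PtEq k (Z i) (Z j)) →
      eval (coordsOf k Z) G ≠ 0 → P Z

/-- Distinct points in multiplicity 1 generic position: every subset `S` imposes
independent conditions in every bidegree, i.e.
`dim_k I(S)_(i,j) = max {0, (i+1)(j+1) - |S|}`. -/
def Mult1Generic {s : ℕ} (Z : Fin s → (k × k) × (k × k)) : Prop :=
  (∀ i, IsPtRep k (Z i)) ∧ (∀ i j, i ≠ j → ¬ PtEq k (Z i) (Z j)) ∧
  ∀ (S : Finset (Fin s)) (i j : ℕ),
    Module.finrank k ↥(bipiece k (⨅ a ∈ S, pointIdeal k (Z a)) (i, j))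
      = (i + 1) * (j + 1) - S.card


section Aux

variable {k : Type*} [Field k]

local notation "R4" => MvPolynomial (Fin 4) k

lemma w4_0 : w4 0 = (1,0) := rfl
lemma w4_1 : w4 1 = (1,0) := rfl
lemma w4_2 : w4 2 = (0,1) := rfl
lemma w4_3 : w4 3 = (0,1) := rfl

/-- explicit exponent vectors -/
def expo (a b c d : ℕ) : Fin 4 →₀ ℕ := Finsupp.equivFunOnFinite.symm ![a,b,c,d]

@[simp] lemma expo_0 (a b c d : ℕ) : expo a b c d 0 = a := rfl
@[simp] lemma expo_1 (a b c d : ℕ) : expo a b c d 1 = b := rfl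
@[simp] lemma expo_2 (a b c d : ℕ) : expo a b c d 2 = c := rfl
@[simp] lemma expo_3 (a b c d : ℕ) : expo a b c d 3 = d := rfl

lemma expo_eq_self (e : Fin 4 →₀ ℕ) : expo (e 0) (e 1) (e 2) (e 3) = e := by
  ext i
  fin_cases i <;> rfl

lemma weight_w4 (e : Fin 4 →₀ ℕ) :
    Finsupp.weight w4 e = (e 0 + e 1, e 2 + e 3) := by
  rw [Finsupp.weight_apply, Finsupp.sum_fintype]
  · rw [Fin.sum_univ_four]
    simp [w4_0, w4_1, w4_2, w4_3, Prod.ext_iff]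
  · intro i; simp

lemma expo_injective2 {a b c d a' b' c' d' : ℕ}
    (h : expo a b c d = expo a' b' c' d') : a = a' ∧ b = b' ∧ c = c' ∧ d = d' := by
  refine ⟨?_, ?_, ?_, ?_⟩
  · have := congrArg (fun f => f 0) h; simpa using this
  · have := congrArg (fun f => f 1) h; simpa using this
  · have := congrArg (fun f => f 2) h; simpa using this
  · have := congrArg (fun f => f 3) h; simpa using this

lemma monomial_expo_eq (a b c d : ℕ) :
    (monomial (expo a b c d) (1:k)) = X 0 ^ a * X 1 ^ b * X 2 ^ c * X 3 ^ d := by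
  have h : expo a b c d
      = Finsupp.single (0 : Fin 4) a + Finsupp.single 1 b
        + Finsupp.single 2 c + Finsupp.single 3 d := by
    ext i; fin_cases i <;> simp
  rw [h]
  simp [X_pow_eq_monomial, monomial_mul]


open scoped Classical in
/-- all monomials of bidegree (i,j) -/
def monSet (k : Type*) [Field k] (i j : ℕ) : Finset (MvPolynomial (Fin 4) k) :=
  ((Finset.range (i+1)) ×ˢ (Finset.range (j+1))).image
    (fun p => monomial (expo p.1 (i-p.1) p.2 (j-p.2)) (1:k))

lemma H_le_span (i j : ℕ) :
    weightedHomogeneousSubmodule k w4 (i,j)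
      ≤ Submodule.span k ((monSet k i j : Finset (MvPolynomial (Fin 4) k)) : Set _) := by
  intro F hF
  rw [mem_weightedHomogeneousSubmodule] at hF
  rw [F.as_sum]
  refine Submodule.sum_mem _ (fun e he => ?_)
  have hdeg := hF (mem_support_iff.mp he)
  rw [weight_w4, Prod.ext_iff] at hdeg
  simp only at hdeg
  have h1 : e 0 + e 1 = i := hdeg.1
  have h2 : e 2 + e 3 = j := hdeg.2
  have hmem : monomial e (1:k) ∈ (monSet k i j : Set (MvPolynomial (Fin 4) k)) := by
    rw [monSet]
    simp only [Finset.coe_image, Set.mem_image, Finset.mem_coe, Finset.mem_product,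
      Finset.mem_range]
    refine ⟨(e 0, e 2), ⟨by omega, by omega⟩, ?_⟩
    have hb : i - e 0 = e 1 := by omega
    have hd : j - e 2 = e 3 := by omega
    rw [hb, hd, expo_eq_self]
  have : monomial e (coeff e F) = (coeff e F) • monomial e (1:k) := by
    rw [smul_monomial, smul_eq_mul, mul_one]
  rw [this]
  exact Submodule.smul_mem _ _ (Submodule.subset_span hmem)

lemma findim_of_le_H {i j : ℕ} (p : Submodule k (MvPolynomial (Fin 4) k))
    (h : p ≤ weightedHomogeneousSubmodule k w4 (i,j)) : FiniteDimensional k p :=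
  Submodule.finiteDimensional_of_le (le_trans h (H_le_span i j))

instance findim_H (i j : ℕ) :
    FiniteDimensional k (weightedHomogeneousSubmodule k w4 (i,j)) :=
  findim_of_le_H _ le_rfl

lemma finrank_H_le (i j : ℕ) :
    Module.finrank k (weightedHomogeneousSubmodule k w4 (i,j)) ≤ (i+1) * (j+1) := by
  calc Module.finrank k (weightedHomogeneousSubmodule k w4 (i,j))
      ≤ Module.finrank k (Submodule.span k ((monSet k i j : Finset (MvPolynomial (Fin 4) k)) : Set (MvPolynomial (Fin 4) k))) :=
        Submodule.finrank_mono (H_le_span i j)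
    _ ≤ (monSet k i j).card := by
        simpa [Set.finrank] using finrank_span_finset_le_card (monSet k i j)
    _ ≤ ((Finset.range (i+1)) ×ˢ (Finset.range (j+1))).card := by
        classical
        rw [monSet]
        convert Finset.card_image_le
          (f := fun p : ℕ × ℕ => monomial (expo p.1 (i-p.1) p.2 (j-p.2)) (1:k))
          (s := (Finset.range (i+1)) ×ˢ (Finset.range (j+1))) using 2
    _ = (i+1) * (j+1) := by simp

lemma bipiece_le_H (J : Ideal (MvPolynomial (Fin 4) k)) (d : ℕ × ℕ) :
    bipiece k J d ≤ weightedHomogeneousSubmodule k w4 d := inf_le_right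

lemma findim_bipiece (J : Ideal (MvPolynomial (Fin 4) k)) (d : ℕ × ℕ) :
    FiniteDimensional k (bipiece k J d) :=
  findim_of_le_H _ (bipiece_le_H J d)

lemma finrank_inf_ge {V : Type*} [AddCommGroup V] [Module k V]
    (H U W : Submodule k V) [FiniteDimensional k H]
    (hU : U ≤ H) (hW : W ≤ H) {n m N : ℕ}
    (hn : n ≤ Module.finrank k U) (hm : m ≤ Module.finrank k W)
    (hN : Module.finrank k H ≤ N) :
    n + m - N ≤ Module.finrank k ↥(U ⊓ W) := by
  haveI : FiniteDimensional k U := Submodule.finiteDimensional_of_le hU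
  haveI : FiniteDimensional k W := Submodule.finiteDimensional_of_le hW
  have hsup : Module.finrank k ↥(U ⊔ W) ≤ N :=
    le_trans (Submodule.finrank_mono (sup_le hU hW)) hN
  have := Submodule.finrank_sup_add_finrank_inf_eq U W
  omega

lemma whPow {F : MvPolynomial (Fin 4) k} {m : ℕ × ℕ}
    (h : F.IsWeightedHomogeneous w4 m) (n : ℕ) :
    (F ^ n).IsWeightedHomogeneous w4 (n • m) := by
  induction n with
  | zero => simpa using isWeightedHomogeneous_one k w4
  | succ n ih =>
      rw [pow_succ, succ_nsmul]
      exact ih.mul h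

lemma pow_mul_pow_mem_sq {A B : MvPolynomial (Fin 4) k} {J : Ideal (MvPolynomial (Fin 4) k)}
    (hA : A ∈ J) (hB : B ∈ J) {s t : ℕ} (hst : 2 ≤ s + t) :
    A ^ s * B ^ t ∈ J ^ 2 := by
  rw [sq]
  rcases Nat.lt_or_ge s 1 with hs | hs
  · -- s = 0, t ≥ 2
    interval_cases s
    obtain ⟨u, rfl⟩ : ∃ u, t = u + 2 := ⟨t - 2, by omega⟩
    have : A ^ 0 * B ^ (u + 2) = B ^ u * (B * B) := by ring
    rw [this]
    exact Ideal.mul_mem_left _ _ (Ideal.mul_mem_mul hB hB)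
  · rcases Nat.lt_or_ge t 1 with ht | ht
    · interval_cases t
      obtain ⟨u, rfl⟩ : ∃ u, s = u + 2 := ⟨s - 2, by omega⟩
      have : A ^ (u + 2) * B ^ 0 = A ^ u * (A * A) := by ring
      rw [this]
      exact Ideal.mul_mem_left _ _ (Ideal.mul_mem_mul hA hA)
    · obtain ⟨u, rfl⟩ : ∃ u, s = u + 1 := ⟨s - 1, by omega⟩
      obtain ⟨v, rfl⟩ : ∃ v, t = v + 1 := ⟨t - 1, by omega⟩
      have : A ^ (u+1) * B ^ (v+1) = (A ^ u * B ^ v) * (A * B) := by ring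
      rw [this]
      exact Ideal.mul_mem_left _ _ (Ideal.mul_mem_mul hA hB)


lemma decomp_finset (f : MvPolynomial (Fin 4) k) :
    f = ∑ m ∈ Finset.image (Finsupp.weight w4) f.support,
          weightedHomogeneousComponent w4 m f := by
  classical
  conv_lhs => rw [← sum_weightedHomogeneousComponent w4 f]
  exact finsum_eq_finset_sum_of_support_subset _ (by
    intro m hm
    simp only [Function.mem_support] at hm
    by_contra hmem
    exact hm (weightedHomogeneousComponent_eq_zero_of_notMem w4 f m hmem))

lemma pi_mul_mem {J : Ideal (MvPolynomial (Fin 4) k)} {A : MvPolynomial (Fin 4) k}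
    (hAJ : A ∈ J) {a : ℕ × ℕ} (hA : A.IsWeightedHomogeneous w4 a)
    (u : MvPolynomial (Fin 4) k) (d : ℕ × ℕ) :
    weightedHomogeneousComponent w4 d (u * A) ∈ J := by
  classical
  have hrw : u * A = ∑ m ∈ Finset.image (Finsupp.weight w4) u.support,
      (weightedHomogeneousComponent w4 m u) * A := by
    rw [← Finset.sum_mul, ← decomp_finset]
  rw [hrw, map_sum]
  refine Ideal.sum_mem _ (fun m _ => ?_)
  have hhom : ((weightedHomogeneousComponent w4 m u) * A).IsWeightedHomogeneous w4 (m + a) :=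
    (weightedHomogeneousComponent_isWeightedHomogeneous m u).mul hA
  by_cases h : d = m + a
  · rw [h, hhom.weightedHomogeneousComponent_same]
    exact Ideal.mul_mem_left _ _ hAJ
  · rw [hhom.weightedHomogeneousComponent_ne d h]
    exact Ideal.zero_mem _

lemma gen1_hom (p : (k × k) × (k × k)) :
    (C p.1.2 * X 0 - C p.1.1 * X 1 : MvPolynomial (Fin 4) k).IsWeightedHomogeneous w4 (1,0) := by
  rw [← mem_weightedHomogeneousSubmodule]
  refine sub_mem ?_ ?_ <;> rw [C_mul']
  · exact Submodule.smul_mem _ _ (isWeightedHomogeneous_X k w4 0)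
  · exact Submodule.smul_mem _ _ (isWeightedHomogeneous_X k w4 1)

lemma gen2_hom (p : (k × k) × (k × k)) :
    (C p.2.2 * X 2 - C p.2.1 * X 3 : MvPolynomial (Fin 4) k).IsWeightedHomogeneous w4 (0,1) := by
  rw [← mem_weightedHomogeneousSubmodule]
  refine sub_mem ?_ ?_ <;> rw [C_mul']
  · exact Submodule.smul_mem _ _ (isWeightedHomogeneous_X k w4 2)
  · exact Submodule.smul_mem _ _ (isWeightedHomogeneous_X k w4 3)

lemma comp_mem_pointIdeal (p : (k × k) × (k × k)) (d : ℕ × ℕ)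
    {f : MvPolynomial (Fin 4) k} (hf : f ∈ pointIdeal k p) :
    weightedHomogeneousComponent w4 d f ∈ pointIdeal k p := by
  rw [pointIdeal] at hf ⊢
  obtain ⟨u, v, rfl⟩ := Ideal.mem_span_pair.mp hf
  rw [map_add]
  refine add_mem ?_ ?_
  · exact pi_mul_mem (Ideal.subset_span (by simp)) (gen1_hom p) u d
  · exact pi_mul_mem (Ideal.subset_span (by simp)) (gen2_hom p) v d

lemma comp_mem_I {s : ℕ} (Z : Fin s → (k × k) × (k × k)) (d : ℕ × ℕ)
    {f : MvPolynomial (Fin 4) k} (hf : f ∈ idealOfPoints k Z) :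
    weightedHomogeneousComponent w4 d f ∈ idealOfPoints k Z := by
  rw [idealOfPoints, Ideal.mem_iInf] at hf ⊢
  exact fun i => comp_mem_pointIdeal (Z i) d (hf i)

lemma sq_piece_zero {s : ℕ} (Z : Fin s → (k × k) × (k × k))
    (hbot : ∀ e : ℕ × ℕ, e.1 + e.2 ≤ 3 → bipiece k (idealOfPoints k Z) e = ⊥)
    {d : ℕ × ℕ} (hd : d.1 + d.2 ≤ 7) {F : MvPolynomial (Fin 4) k}
    (hF : F ∈ idealOfPoints k Z ^ 2) (hhom : F.IsWeightedHomogeneous w4 d) :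
    F = 0 := by
  classical
  have key : weightedHomogeneousComponent w4 d F = 0 := by
    rw [sq] at hF
    refine Submodule.mul_induction_on hF ?_ ?_
    · intro m hm n hn
      have hrw : m * n = ∑ e ∈ Finset.image (Finsupp.weight w4) m.support,
          ∑ e' ∈ Finset.image (Finsupp.weight w4) n.support,
            (weightedHomogeneousComponent w4 e m) * (weightedHomogeneousComponent w4 e' n) := by
        conv_lhs => rw [decomp_finset m, decomp_finset n]
        rw [Finset.sum_mul_sum]
      rw [hrw, map_sum]
      refine Finset.sum_eq_zero (fun e _ => ?_)
      rw [map_sum]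
      refine Finset.sum_eq_zero (fun e' _ => ?_)
      have hhom' : ((weightedHomogeneousComponent w4 e m) *
          (weightedHomogeneousComponent w4 e' n)).IsWeightedHomogeneous w4 (e + e') :=
        (weightedHomogeneousComponent_isWeightedHomogeneous e m).mul
          (weightedHomogeneousComponent_isWeightedHomogeneous e' n)
      by_cases h : d = e + e'
      · rw [h, hhom'.weightedHomogeneousComponent_same]
        have hsum : e.1 + e.2 ≤ 3 ∨ e'.1 + e'.2 ≤ 3 := by
          have h1 : e.1 + e'.1 = d.1 := by rw [h]; rfl
          have h2 : e.2 + e'.2 = d.2 := by rw [h]; rfl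
          omega
        rcases hsum with hs | hs
        · have : weightedHomogeneousComponent w4 e m ∈ bipiece k (idealOfPoints k Z) e := by
            refine Submodule.mem_inf.mpr ⟨?_, weightedHomogeneousComponent_mem w4 m e⟩
            exact comp_mem_I Z e hm
          rw [hbot e hs] at this
          rw [(Submodule.mem_bot k).mp this, zero_mul]
        · have : weightedHomogeneousComponent w4 e' n ∈ bipiece k (idealOfPoints k Z) e' := by
            refine Submodule.mem_inf.mpr ⟨?_, weightedHomogeneousComponent_mem w4 n e'⟩
            exact comp_mem_I Z e' hn
          rw [hbot e' hs] at this
          rw [(Submodule.mem_bot k).mp this, mul_zero]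
      · exact hhom'.weightedHomogeneousComponent_ne d h
    · intro x y hx hy
      rw [map_add, hx, hy, add_zero]
  rwa [hhom.weightedHomogeneousComponent_same] at key


lemma exists_c {a : k × k} (ha : a ≠ 0) : ∃ c : k × k, c.1 * a.1 + c.2 * a.2 ≠ 0 := by
  rcases eq_or_ne a.1 0 with h1 | h1
  · refine ⟨(0,1), ?_⟩
    have h2 : a.2 ≠ 0 := by
      intro h2
      exact ha (Prod.ext h1 h2)
    simpa using h2
  · exact ⟨(1,0), by simpa using h1⟩

/-- substitution sending the standard point to `p` -/
def gmap (p : (k × k) × (k × k)) (c e : k × k) : Fin 4 → MvPolynomial (Fin 4) k :=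
  ![C c.1 * X 0 + C c.2 * X 1,
    C p.1.2 * X 0 - C p.1.1 * X 1,
    C e.1 * X 2 + C e.2 * X 3,
    C p.2.2 * X 2 - C p.2.1 * X 3]

/-- inverse substitution -/
def gmap' (p : (k × k) × (k × k)) (c e : k × k) : Fin 4 → MvPolynomial (Fin 4) k :=
  ![C (p.1.1 / (c.1 * p.1.1 + c.2 * p.1.2)) * X 0 + C (c.2 / (c.1 * p.1.1 + c.2 * p.1.2)) * X 1,
    C (p.1.2 / (c.1 * p.1.1 + c.2 * p.1.2)) * X 0 - C (c.1 / (c.1 * p.1.1 + c.2 * p.1.2)) * X 1,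
    C (p.2.1 / (e.1 * p.2.1 + e.2 * p.2.2)) * X 2 + C (e.2 / (e.1 * p.2.1 + e.2 * p.2.2)) * X 3,
    C (p.2.2 / (e.1 * p.2.1 + e.2 * p.2.2)) * X 2 - C (e.1 / (e.1 * p.2.1 + e.2 * p.2.2)) * X 3]

lemma tau_inv (p : (k × k) × (k × k)) (c e : k × k)
    (hc : c.1 * p.1.1 + c.2 * p.1.2 ≠ 0) (he : e.1 * p.2.1 + e.2 * p.2.2 ≠ 0) :
    (aeval (gmap' p c e)).comp (aeval (gmap p c e)) =
      AlgHom.id k (MvPolynomial (Fin 4) k) := by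
  have key : ∀ i : Fin 4,
      (aeval (gmap' p c e) : MvPolynomial (Fin 4) k →ₐ[k] MvPolynomial (Fin 4) k)
        ((aeval (gmap p c e) : MvPolynomial (Fin 4) k →ₐ[k] MvPolynomial (Fin 4) k) (X i))
        = (X i : MvPolynomial (Fin 4) k) := by
    intro i
    have tac : ∀ n : Fin 4,
        (aeval (gmap' p c e) : MvPolynomial (Fin 4) k →ₐ[k] MvPolynomial (Fin 4) k)
          (gmap p c e n) = X n → (aeval (gmap' p c e) : MvPolynomial (Fin 4) k →ₐ[k]
            MvPolynomial (Fin 4) k) ((aeval (gmap p c e) : MvPolynomial (Fin 4) k →ₐ[k]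
              MvPolynomial (Fin 4) k) (X n)) = X n := by
      intro n h; rwa [aeval_X]
    have h0 := tac 0 (by
      simp only [gmap, gmap', Matrix.cons_val_zero, Matrix.cons_val_one, Matrix.head_cons,
        Matrix.cons_val_two, Matrix.tail_cons, Matrix.cons_val_three, map_add, map_sub,
        map_mul, aeval_C, aeval_X, algebraMap_eq, C_mul', map_smul, smul_add, smul_sub,
        smul_smul]
      match_scalars <;> field_simp <;> ring)
    have h1 := tac 1 (by
      simp only [gmap, gmap', Matrix.cons_val_zero, Matrix.cons_val_one, Matrix.head_cons,
        Matrix.cons_val_two, Matrix.tail_cons, Matrix.cons_val_three, map_add, map_sub,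
        map_mul, aeval_C, aeval_X, algebraMap_eq, C_mul', map_smul, smul_add, smul_sub,
        smul_smul]
      match_scalars <;> field_simp <;> ring_nf
      rw [← add_mul, mul_inv_cancel₀ (by intro h; apply hc; linear_combination h)])
    have h2 := tac 2 (by
      simp only [gmap, gmap', Matrix.cons_val_zero, Matrix.cons_val_one, Matrix.head_cons,
        Matrix.cons_val_two, Matrix.tail_cons, Matrix.cons_val_three, map_add, map_sub,
        map_mul, aeval_C, aeval_X, algebraMap_eq, C_mul', map_smul, smul_add, smul_sub,
        smul_smul]
      match_scalars <;> field_simp <;> ring)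
    have h3 := tac 3 (by
      simp only [gmap, gmap', Matrix.cons_val_zero, Matrix.cons_val_one, Matrix.head_cons,
        Matrix.cons_val_two, Matrix.tail_cons, Matrix.cons_val_three, map_add, map_sub,
        map_mul, aeval_C, aeval_X, algebraMap_eq, C_mul', map_smul, smul_add, smul_sub,
        smul_smul]
      match_scalars <;> field_simp <;> ring_nf
      rw [← add_mul, mul_inv_cancel₀ (by intro h; apply he; linear_combination h)])
    fin_cases i
    · exact h0
    · exact h1
    · exact h2
    · exact h3
  apply MvPolynomial.algHom_ext
  intro i
  simpa using key i

lemma tau_injective (p : (k × k) × (k × k)) (c e : k × k)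
    (hc : c.1 * p.1.1 + c.2 * p.1.2 ≠ 0) (he : e.1 * p.2.1 + e.2 * p.2.2 ≠ 0) :
    Function.Injective (aeval (gmap p c e) :
      MvPolynomial (Fin 4) k →ₐ[k] MvPolynomial (Fin 4) k) := by
  have h : Function.LeftInverse (aeval (gmap' p c e)) (aeval (gmap p c e)) := by
    intro F
    have := congrArg (fun φ : MvPolynomial (Fin 4) k →ₐ[k] MvPolynomial (Fin 4) k => φ F)
      (tau_inv p c e hc he)
    simpa using this
  exact h.injective


lemma lin_hom_x (r s : k) :
    (C r * X 0 + C s * X 1 : MvPolynomial (Fin 4) k).IsWeightedHomogeneous w4 (1,0) := by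
  rw [← mem_weightedHomogeneousSubmodule]
  refine add_mem ?_ ?_ <;> rw [C_mul']
  · exact Submodule.smul_mem _ _ (isWeightedHomogeneous_X k w4 0)
  · exact Submodule.smul_mem _ _ (isWeightedHomogeneous_X k w4 1)

lemma lin_hom_y (r s : k) :
    (C r * X 2 + C s * X 3 : MvPolynomial (Fin 4) k).IsWeightedHomogeneous w4 (0,1) := by
  rw [← mem_weightedHomogeneousSubmodule]
  refine add_mem ?_ ?_ <;> rw [C_mul']
  · exact Submodule.smul_mem _ _ (isWeightedHomogeneous_X k w4 2)
  · exact Submodule.smul_mem _ _ (isWeightedHomogeneous_X k w4 3)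

lemma point_piece_finrank (p : (k × k) × (k × k)) (hp : IsPtRep k p) :
    17 ≤ Module.finrank k (bipiece k (pointIdeal k p ^ 2) (3,4)) := by
  classical
  obtain ⟨c, hc⟩ := exists_c hp.1
  obtain ⟨e, he⟩ := exists_c hp.2
  set τ : MvPolynomial (Fin 4) k →ₐ[k] MvPolynomial (Fin 4) k := aeval (gmap p c e) with hτ
  have hinj : Function.Injective τ := tau_injective p c e hc he
  set s17 : Finset (ℕ × ℕ) :=
    (Finset.range 4 ×ˢ Finset.range 5).filter (fun q => q.1 + q.2 ≤ 5) with hs17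
  have hcard : s17.card = 17 := by decide
  set fam : s17 → MvPolynomial (Fin 4) k :=
    (fun q => τ (monomial (expo q.1.1 (3 - q.1.1) q.1.2 (4 - q.1.2)) 1)) with hfamdef
  have hexpinj : Function.Injective
      (fun q : s17 => expo q.1.1 (3 - q.1.1) q.1.2 (4 - q.1.2)) := by
    intro q q' h
    obtain ⟨h1, -, h2, -⟩ := expo_injective2 h
    exact Subtype.ext (Prod.ext h1 h2)
  have hmono : LinearIndependent k
      (fun q : s17 => (monomial (expo q.1.1 (3 - q.1.1) q.1.2 (4 - q.1.2)) (1:k))) := by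
    have h := (basisMonomials (Fin 4) k).linearIndependent.comp _ hexpinj
    rwa [coe_basisMonomials] at h
  have hfam : LinearIndependent k fam := by
    have h := hmono.map' τ.toLinearMap (LinearMap.ker_eq_bot.mpr hinj)
    exact h
  have hmem : ∀ q : s17, fam q ∈ bipiece k (pointIdeal k p ^ 2) (3,4) := by
    rintro ⟨⟨a, b⟩, hq⟩
    rw [hs17, Finset.mem_filter, Finset.mem_product, Finset.mem_range, Finset.mem_range] at hq
    obtain ⟨⟨ha, hb⟩, hab⟩ := hq
    have hfam_eq : fam ⟨(a, b), by
        rw [hs17, Finset.mem_filter, Finset.mem_product, Finset.mem_range, Finset.mem_range]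
        exact ⟨⟨ha, hb⟩, hab⟩⟩
        = (C c.1 * X 0 + C c.2 * X 1) ^ a * (C p.1.2 * X 0 - C p.1.1 * X 1) ^ (3 - a)
          * (C e.1 * X 2 + C e.2 * X 3) ^ b * (C p.2.2 * X 2 - C p.2.1 * X 3) ^ (4 - b) := by
      rw [hfamdef]
      simp only [monomial_expo_eq, map_mul, map_pow, hτ, aeval_X, gmap,
        Matrix.cons_val_zero, Matrix.cons_val_one, Matrix.head_cons,
        Matrix.cons_val_two, Matrix.tail_cons, Matrix.cons_val_three]
    rw [hfam_eq]
    refine Submodule.mem_inf.mpr ⟨?_, ?_⟩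
    · -- ideal membership
      show _ ∈ pointIdeal k p ^ 2
      have hA : (C p.1.2 * X 0 - C p.1.1 * X 1 : MvPolynomial (Fin 4) k) ∈ pointIdeal k p :=
        Ideal.subset_span (Set.mem_insert _ _)
      have hB : (C p.2.2 * X 2 - C p.2.1 * X 3 : MvPolynomial (Fin 4) k) ∈ pointIdeal k p :=
        Ideal.subset_span (Set.mem_insert_of_mem _ rfl)
      have hre : (C c.1 * X 0 + C c.2 * X 1 : MvPolynomial (Fin 4) k) ^ a
            * (C p.1.2 * X 0 - C p.1.1 * X 1) ^ (3 - a)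
            * (C e.1 * X 2 + C e.2 * X 3) ^ b * (C p.2.2 * X 2 - C p.2.1 * X 3) ^ (4 - b)
          = ((C c.1 * X 0 + C c.2 * X 1) ^ a * (C e.1 * X 2 + C e.2 * X 3) ^ b)
            * ((C p.1.2 * X 0 - C p.1.1 * X 1) ^ (3 - a)
              * (C p.2.2 * X 2 - C p.2.1 * X 3) ^ (4 - b)) := by ring
      rw [hre]
      exact Ideal.mul_mem_left _ _ (pow_mul_pow_mem_sq hA hB (by omega))
    · -- homogeneity
      rw [mem_weightedHomogeneousSubmodule]
      have hhom := (((whPow (lin_hom_x c.1 c.2) a).mul (whPow (gen1_hom p) (3-a))).mul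
        (whPow (lin_hom_y e.1 e.2) b)).mul (whPow (gen2_hom p) (4-b))
      have hdeg : ((a • ((1:ℕ),(0:ℕ)) + (3-a) • ((1:ℕ),(0:ℕ))) + b • ((0:ℕ),(1:ℕ)))
          + (4-b) • ((0:ℕ),(1:ℕ)) = ((3:ℕ),(4:ℕ)) := by
        simp only [Prod.smul_mk, smul_eq_mul, Prod.mk_add_mk, Prod.mk.injEq]
        omega
      exact hdeg ▸ hhom
  have hspan : Submodule.span k (Set.range fam) ≤ bipiece k (pointIdeal k p ^ 2) (3,4) := by
    rw [Submodule.span_le]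
    rintro - ⟨q, rfl⟩
    exact hmem q
  haveI := findim_bipiece (k := k) (pointIdeal k p ^ 2) (3,4)
  have h17 : Module.finrank k (Submodule.span k (Set.range fam)) = 17 := by
    rw [finrank_span_eq_card hfam, Fintype.card_coe, hcard]
  exact h17 ▸ Submodule.finrank_mono hspan

end Aux

/-- For six points of `P^1 × P^1` in multiplicity 1 generic position,
`I^2 ≠ I^(2)`; indeed `α(I^(2)) ≤ 7` while `α(I^2) = 8`, so `I^(2) ⊄ I^2`. -/
theorem six_points_second_symbolic_ne_square {k : Type*} [Field k] [IsAlgClosed k]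
    (Z : Fin 6 → (k × k) × (k × k)) (hZ : Mult1Generic k Z) :
    idealOfPoints k Z ^ 2 ≠ symbolicPower k Z 2 ∧
    alpha k (symbolicPower k Z 2) ≤ 7 ∧
    alpha k (idealOfPoints k Z ^ 2) = 8 ∧
    ¬ symbolicPower k Z 2 ≤ idealOfPoints k Z ^ 2 := by
  classical
  obtain ⟨hrep, hdist, hdim⟩ := hZ
  have huniv : (⨅ a ∈ (Finset.univ : Finset (Fin 6)), pointIdeal k (Z a))
      = idealOfPoints k Z := by
    simp [idealOfPoints]
  -- small bidegree pieces of I vanish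
  have hbot : ∀ e : ℕ × ℕ, e.1 + e.2 ≤ 3 → bipiece k (idealOfPoints k Z) e = ⊥ := by
    rintro ⟨i, j⟩ he
    simp only at he
    have h := hdim Finset.univ i j
    rw [huniv, Finset.card_univ, Fintype.card_fin] at h
    have h6 : (i + 1) * (j + 1) ≤ 6 := by
      have hi : i ≤ 3 := by omega
      have hj : j ≤ 3 := by omega
      interval_cases i <;> interval_cases j <;> omega
    haveI := findim_bipiece (k := k) (idealOfPoints k Z) (i, j)
    apply Submodule.finrank_eq_zero.mp
    omega
  have hzero : ∀ F ∈ idealOfPoints k Z ^ 2, ∀ d : ℕ × ℕ,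
      F.IsWeightedHomogeneous w4 d → d.1 + d.2 ≤ 7 → F = 0 := by
    intro F hF d hhom hd
    exact sq_piece_zero Z hbot hd hF hhom
  -- a nonzero element of I of bidegree (2,2)
  have h22 := hdim Finset.univ 2 2
  rw [huniv, Finset.card_univ, Fintype.card_fin] at h22
  haveI := findim_bipiece (k := k) (idealOfPoints k Z) ((2:ℕ), (2:ℕ))
  have hne22 : bipiece k (idealOfPoints k Z) (2,2) ≠ ⊥ := by
    intro hb
    rw [hb, finrank_bot] at h22
    omega
  obtain ⟨F2, hF2mem, hF2ne⟩ := Submodule.ne_bot_iff _ |>.mp hne22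
  obtain ⟨hF2I, hF2hom⟩ := Submodule.mem_inf.mp hF2mem
  have hF2I' : F2 ∈ idealOfPoints k Z := hF2I
  have hF2hom' : F2.IsWeightedHomogeneous w4 (2,2) := hF2hom
  have h8mem : 8 ∈ {t | ∃ F ∈ idealOfPoints k Z ^ 2, F ≠ 0 ∧
      ∃ d : ℕ × ℕ, d.1 + d.2 = t ∧ F.IsWeightedHomogeneous w4 d} := by
    refine ⟨F2 * F2, ?_, mul_ne_zero hF2ne hF2ne, ((4:ℕ), (4:ℕ)), by norm_num, ?_⟩
    · rw [sq]
      exact Ideal.mul_mem_mul hF2I' hF2I'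
    · have h := hF2hom'.mul hF2hom'
      exact h
  have halpha2 : alpha k (idealOfPoints k Z ^ 2) = 8 := by
    refine le_antisymm (Nat.sInf_le h8mem) (le_csInf ⟨8, h8mem⟩ ?_)
    rintro t ⟨F, hFmem, hFne, d, hdt, hdhom⟩
    by_contra hlt
    exact hFne (hzero F hFmem d hdhom (by omega))
  -- the symbolic element of bidegree (3,4)
  set U : Fin 6 → Submodule k (MvPolynomial (Fin 4) k) :=
    fun i => bipiece k (pointIdeal k (Z i) ^ 2) (3,4) with hU
  have hUfr : ∀ i, 17 ≤ Module.finrank k (U i) := fun i =>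
    point_piece_finrank (Z i) (hrep i)
  have hUH : ∀ i, U i ≤ weightedHomogeneousSubmodule k w4 ((3:ℕ),(4:ℕ)) := fun i =>
    bipiece_le_H _ _
  have hH20 : Module.finrank k (weightedHomogeneousSubmodule k w4 ((3:ℕ),(4:ℕ))) ≤ 20 := by
    have := finrank_H_le (k := k) 3 4
    omega
  set H := weightedHomogeneousSubmodule k w4 ((3:ℕ),(4:ℕ)) with hHdef
  set W : Submodule k (MvPolynomial (Fin 4) k) :=
    ((((U 0 ⊓ U 1) ⊓ U 2) ⊓ U 3) ⊓ U 4) ⊓ U 5 with hW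
  have h01 : 14 ≤ Module.finrank k ↥(U 0 ⊓ U 1) := by
    have := finrank_inf_ge H (U 0) (U 1) (hUH 0) (hUH 1) (hUfr 0) (hUfr 1) hH20
    omega
  have hle01 : U 0 ⊓ U 1 ≤ H := inf_le_left.trans (hUH 0)
  have h012 : 11 ≤ Module.finrank k ↥((U 0 ⊓ U 1) ⊓ U 2) := by
    have := finrank_inf_ge H _ _ hle01 (hUH 2) h01 (hUfr 2) hH20
    omega
  have hle012 : (U 0 ⊓ U 1) ⊓ U 2 ≤ H := inf_le_left.trans hle01
  have h0123 : 8 ≤ Module.finrank k ↥(((U 0 ⊓ U 1) ⊓ U 2) ⊓ U 3) := by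
    have := finrank_inf_ge H _ _ hle012 (hUH 3) h012 (hUfr 3) hH20
    omega
  have hle0123 : ((U 0 ⊓ U 1) ⊓ U 2) ⊓ U 3 ≤ H := inf_le_left.trans hle012
  have h01234 : 5 ≤ Module.finrank k ↥((((U 0 ⊓ U 1) ⊓ U 2) ⊓ U 3) ⊓ U 4) := by
    have := finrank_inf_ge H _ _ hle0123 (hUH 4) h0123 (hUfr 4) hH20
    omega
  have hle01234 : (((U 0 ⊓ U 1) ⊓ U 2) ⊓ U 3) ⊓ U 4 ≤ H := inf_le_left.trans hle0123
  have hWfr : 2 ≤ Module.finrank k ↥W := by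
    have := finrank_inf_ge H _ _ hle01234 (hUH 5) h01234 (hUfr 5) hH20
    rw [hW]
    omega
  have hWle : W ≤ H := inf_le_left.trans hle01234
  haveI : FiniteDimensional k W := findim_of_le_H (k := k) W hWle
  have hWne : W ≠ ⊥ := by
    intro hb
    rw [hb, finrank_bot] at hWfr
    omega
  obtain ⟨F, hFW, hFne⟩ := Submodule.ne_bot_iff _ |>.mp hWne
  have hsub : ∀ i : Fin 6, W ≤ U i := by
    intro i
    fin_cases i
    · exact inf_le_left.trans (inf_le_left.trans (inf_le_left.trans
        (inf_le_left.trans inf_le_left)))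
    · exact inf_le_left.trans (inf_le_left.trans (inf_le_left.trans
        (inf_le_left.trans inf_le_right)))
    · exact inf_le_left.trans (inf_le_left.trans (inf_le_left.trans inf_le_right))
    · exact inf_le_left.trans (inf_le_left.trans inf_le_right)
    · exact inf_le_left.trans inf_le_right
    · exact inf_le_right
  have hFsymb : F ∈ symbolicPower k Z 2 := by
    rw [symbolicPower, Ideal.mem_iInf]
    intro i
    exact (Submodule.mem_inf.mp (hsub i hFW)).1
  have hFhom : F.IsWeightedHomogeneous w4 (3,4) :=
    (Submodule.mem_inf.mp (hsub 0 hFW)).2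
  have h7mem : 7 ∈ {t | ∃ G ∈ symbolicPower k Z 2, G ≠ 0 ∧
      ∃ d : ℕ × ℕ, d.1 + d.2 = t ∧ G.IsWeightedHomogeneous w4 d} :=
    ⟨F, hFsymb, hFne, ((3:ℕ), (4:ℕ)), by norm_num, hFhom⟩
  have hnotle : ¬ symbolicPower k Z 2 ≤ idealOfPoints k Z ^ 2 := by
    intro hle
    exact hFne (hzero F (hle hFsymb) (3,4) hFhom (by norm_num))
  refine ⟨?_, Nat.sInf_le h7mem, halpha2, hnotle⟩
  intro heq
  exact hnotle (by rw [heq])
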